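/- Let T be the operator on bounded functions V : X \to \mathbb{R} given by (T V)(x) = max(\ell(x), \gamma V(f(x))) for a map f : X \to X, bounded \ell, and \gamma \in (0,1). Then T has a unique bounded fixed point V^*, and V^*(x) = \sup_{t \ge 0} \gamma^t \ell(f^t(x)), where f^t is the t-fold iterate of f. -/
import Mathlib


/-- The discounted deterministic HJ safety Bellman operator
`(TV)(x) = max(ℓ(x), γ V(f(x)))` has a unique bounded fixed point, given in closed form
by `V*(x) = ⨆ t, γ^t ℓ(f^[t](x))`. -/
theorem stmt_17 {X : Type*} (f : X → X) (ℓ : X → ℝ)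
    (B : ℝ) (hℓ : ∀ x, |ℓ x| ≤ B) (γ : ℝ) (hγ : γ ∈ Set.Ioo (0:ℝ) 1) :
    (∀ x, (⨆ t : ℕ, γ ^ t * ℓ (f^[t] x)) =
        max (ℓ x) (γ * ⨆ t : ℕ, γ ^ t * ℓ (f^[t] (f x)))) ∧
    (∀ V : X → ℝ, (∃ C, ∀ x, |V x| ≤ C) →
      (∀ x, V x = max (ℓ x) (γ * V (f x))) →
      V = fun x => ⨆ t : ℕ, γ ^ t * ℓ (f^[t] x)) := by
  obtain ⟨hγ0, hγ1⟩ := hγ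
  have hγt : ∀ t : ℕ, 0 < γ ^ t := fun t => pow_pos hγ0 t
  have hγt1 : ∀ t : ℕ, γ ^ t ≤ 1 := fun t => pow_le_one₀ hγ0.le hγ1.le
  have habs : ∀ x (t : ℕ), |γ ^ t * ℓ (f^[t] x)| ≤ B := by
    intro x t
    rw [abs_mul, abs_of_pos (hγt t)]
    calc γ ^ t * |ℓ (f^[t] x)| ≤ 1 * B := by
          have hB : (0:ℝ) ≤ B := (abs_nonneg _).trans (hℓ x)
          exact mul_le_mul (hγt1 t) (hℓ _) (abs_nonneg _) one_pos.le
      _ = B := one_mul B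
  have hbdd : ∀ x, BddAbove (Set.range fun t : ℕ => γ ^ t * ℓ (f^[t] x)) := by
    intro x
    exact ⟨B, by rintro _ ⟨t, rfl⟩; exact (abs_le.mp (habs x t)).2⟩
  have hlow : ∀ x, -B ≤ ⨆ t : ℕ, γ ^ t * ℓ (f^[t] x) := by
    intro x
    calc -B ≤ γ ^ 0 * ℓ (f^[0] x) := by
          simpa using (abs_le.mp (habs x 0)).1
      _ ≤ _ := le_ciSup (hbdd x) 0
  have hupp : ∀ x, (⨆ t : ℕ, γ ^ t * ℓ (f^[t] x)) ≤ B := by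
    intro x
    exact ciSup_le fun t => (abs_le.mp (habs x t)).2
  have hVabs : ∀ x, |⨆ t : ℕ, γ ^ t * ℓ (f^[t] x)| ≤ B := fun x =>
    abs_le.mpr ⟨hlow x, hupp x⟩
  have hfix : ∀ x, (⨆ t : ℕ, γ ^ t * ℓ (f^[t] x)) =
      max (ℓ x) (γ * ⨆ t : ℕ, γ ^ t * ℓ (f^[t] (f x))) := by
    intro x
    apply le_antisymm
    · apply ciSup_le
      intro t
      cases t with
      | zero => simpa using le_max_left _ _
      | succ n =>
        refine le_trans ?_ (le_max_right _ _)
        rw [Function.iterate_succ_apply, pow_succ, mul_comm (γ ^ n) γ, mul_assoc]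
        exact mul_le_mul_of_nonneg_left (le_ciSup (hbdd (f x)) n) hγ0.le
    · apply max_le
      · simpa using le_ciSup (hbdd x) 0
      · rw [Real.mul_iSup_of_nonneg hγ0.le]
        apply ciSup_le
        intro n
        calc γ * (γ ^ n * ℓ (f^[n] (f x))) = γ ^ (n + 1) * ℓ (f^[n + 1] x) := by
              rw [Function.iterate_succ_apply, pow_succ, mul_comm (γ ^ n) γ, mul_assoc]
          _ ≤ _ := le_ciSup (hbdd x) (n + 1)
  refine ⟨hfix, ?_⟩
  rintro V ⟨C, hC⟩ hV
  funext x
  set W : X → ℝ := fun x => ⨆ t : ℕ, γ ^ t * ℓ (f^[t] x) with hW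
  have hWfix : ∀ x, W x = max (ℓ x) (γ * W (f x)) := hfix
  have key : ∀ n : ℕ, ∀ x, |V x - W x| ≤ γ ^ n * (C + B) := by
    intro n
    induction n with
    | zero =>
      intro x
      simpa using (abs_sub (V x) (W x)).trans (add_le_add (hC x) (hVabs x))
    | succ n ih =>
      intro x
      have h1 : |V x - W x| ≤ γ * |V (f x) - W (f x)| := by
        rw [hV x, hWfix x]
        calc |max (ℓ x) (γ * V (f x)) - max (ℓ x) (γ * W (f x))|
            = |max (γ * V (f x)) (ℓ x) - max (γ * W (f x)) (ℓ x)| := by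
              rw [max_comm (ℓ x), max_comm (ℓ x)]
          _ ≤ |γ * V (f x) - γ * W (f x)| := abs_max_sub_max_le_abs _ _ _
          _ = γ * |V (f x) - W (f x)| := by
              rw [← mul_sub, abs_mul, abs_of_pos hγ0]
      calc |V x - W x| ≤ γ * |V (f x) - W (f x)| := h1
        _ ≤ γ * (γ ^ n * (C + B)) := mul_le_mul_of_nonneg_left (ih (f x)) hγ0.le
        _ = γ ^ (n + 1) * (C + B) := by ring
  have htend : Filter.Tendsto (fun n : ℕ => γ ^ n * (C + B)) Filter.atTop (nhds 0) := by
    simpa using (tendsto_pow_atTop_nhds_zero_of_lt_one hγ0.le hγ1).mul_const (C + B)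
  have h0 : |V x - W x| ≤ 0 :=
    ge_of_tendsto' htend (fun n => key n x)
  have := le_antisymm h0 (abs_nonneg _)
  have : V x - W x = 0 := abs_eq_zero.mp this
  linarith [this]
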